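/- Every dense G_δ subset X of C × ℝ (C the Cantor set) that is totally disconnected is zero-dimensional at some point: there exists x ∈ X such that X has a neighborhood basis at x consisting of clopen subsets of X. In particular, no dense totally disconnected G_δ subset of C × ℝ is nowhere zero-dimensional. -/

import Mathlib

open Set TopologicalSpace

/-- A C-set: an intersection of clopen subsets. -/
def IsCSet {X : Type*} [TopologicalSpace X] (A : Set X) : Prop :=
  ∃ S : Set (Set X), (∀ s ∈ S, IsClopen s) ∧ A = ⋂₀ S

/-- A σC-set: a countable union of C-sets. -/
def IsSigmaCSet {X : Type*} [TopologicalSpace X] (A : Set X) : Prop :=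
  ∃ f : ℕ → Set X, (∀ n, IsCSet (f n)) ∧ A = ⋃ n, f n

/-- Almost zero-dimensional: every point has a neighborhood basis of C-sets. -/
def AlmostZeroDimensional (X : Type*) [TopologicalSpace X] : Prop :=
  ∀ x : X, ∀ U ∈ nhds x, ∃ A : Set X, IsCSet A ∧ A ∈ nhds x ∧ A ⊆ U

/-- Cohesive: every point has a neighborhood containing no non-empty clopen set. -/
def Cohesive (X : Type*) [TopologicalSpace X] : Prop :=
  ∀ x : X, ∃ U ∈ nhds x, ∀ A : Set X, A ⊆ U → IsClopen A → A = ∅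

/-- Zero-dimensional: every point has a neighborhood basis of clopen sets. -/
def ZeroDimensional (X : Type*) [TopologicalSpace X] : Prop :=
  ∀ x : X, ∀ U ∈ nhds x, ∃ V : Set X, IsClopen V ∧ x ∈ V ∧ V ⊆ U

open Metric

section Aux

lemma preCantorSet_subset_Icc (n : ℕ) : preCantorSet n ⊆ Set.Icc 0 1 := by
  induction n with
  | zero => simp
  | succ n ih =>
    rintro x (⟨y, hy, rfl⟩ | ⟨y, hy, rfl⟩) <;> obtain ⟨h0, h1⟩ := ih hy <;>
      constructor <;> simp only [] <;> linarith

lemma preCantorSet_gap (n : ℕ) : ∀ (k : ℤ) (x : ℝ), x ∈ preCantorSet n →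
    ¬((3*(k:ℝ)+1 < 3^n * x) ∧ ((3:ℝ)^n * x < 3*(k:ℝ)+2)) := by
  induction n with
  | zero =>
    rintro k x hx ⟨h1, h2⟩
    obtain ⟨h0, hle⟩ := (preCantorSet_subset_Icc 0) hx
    simp only [pow_zero, one_mul] at h1 h2
    have hk0 : (k:ℝ) < 0 := by linarith
    have hk0' : k < 0 := by exact_mod_cast hk0
    have : k ≤ -1 := by omega
    have : (k:ℝ) ≤ -1 := by exact_mod_cast this
    linarith
  | succ n ih =>
    rintro k x (⟨y, hy, rfl⟩ | ⟨y, hy, rfl⟩) ⟨h1, h2⟩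
    · have e : (3:ℝ)^(n+1) * (y/3) = 3^n * y := by rw [pow_succ]; ring
      rw [e] at h1 h2
      exact ih k y hy ⟨h1, h2⟩
    · have e : (3:ℝ)^(n+1) * ((2+y)/3) = 2*3^n + 3^n * y := by rw [pow_succ]; ring
      rw [e] at h1 h2
      cases n with
      | zero =>
        obtain ⟨h0, hle⟩ := (preCantorSet_subset_Icc 0) hy
        simp only [pow_zero, one_mul] at h1 h2
        have hk' : (0:ℤ) < k := by exact_mod_cast (by linarith : (0:ℝ) < (k:ℝ))
        have : (1:ℤ) ≤ k := hk'
        have : (1:ℝ) ≤ (k:ℝ) := by exact_mod_cast this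
        linarith
      | succ m =>
        refine ih (k - 2*3^m) y hy ⟨?_, ?_⟩ <;>
        · push_cast
          have e3 : (3:ℝ)^(m+1) = 3^m * 3 := pow_succ 3 m
          linarith

lemma cantor_gap {u v : ℝ} (h : u < v) : ∃ w, u < w ∧ w < v ∧ w ∉ cantorSet := by
  obtain ⟨n, hn⟩ := pow_unbounded_of_one_lt (R := ℝ) (5/(v-u)) (by norm_num : (1:ℝ) < 3)
  have hN : (0:ℝ) < 3^n := by positivity
  have h5 : 5 < (v-u) * 3^n := by
    rw [div_lt_iff₀ (by linarith)] at hn; linarith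
  set N : ℝ := 3^n with hNdef
  set k : ℤ := ⌊u*N/3⌋ + 1 with hkdef
  have hfl : u*N/3 < (k:ℝ) := by
    rw [hkdef]; push_cast; exact Int.lt_floor_add_one _
  have hfl' : (k:ℝ) ≤ u*N/3 + 1 := by
    rw [hkdef]; push_cast
    have := Int.floor_le (u*N/3); linarith
  have hk1 : u*N < 3*(k:ℝ)+1 := by
    have : u*N < 3*(k:ℝ) := by linarith
    linarith
  have hk2 : 3*(k:ℝ)+2 < v*N := by nlinarith
  refine ⟨(3*(k:ℝ) + 3/2)/N, ?_, ?_, ?_⟩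
  · rw [lt_div_iff₀ hN]; linarith
  · rw [div_lt_iff₀ hN]; linarith
  · intro hw
    have hmem : (3*(k:ℝ) + 3/2)/N ∈ preCantorSet n := Set.mem_iInter.mp hw n
    have hNe : N * ((3*(k:ℝ) + 3/2)/N) = 3*(k:ℝ) + 3/2 := mul_div_cancel₀ _ hN.ne'
    exact preCantorSet_gap n k _ hmem
      ⟨by rw [← hNdef, hNe]; linarith, by rw [← hNdef, hNe]; linarith⟩

lemma cantor_clopen (c : ↥cantorSet) {r : ℝ} (hr : 0 < r) :
    ∃ K : Set ↥cantorSet, IsClopen K ∧ c ∈ K ∧ K ⊆ ball c r := by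
  obtain ⟨wp, hwp1, hwp2, hwp3⟩ := cantor_gap (show (c:ℝ) < (c:ℝ) + r/2 by linarith)
  obtain ⟨wm, hwm1, hwm2, hwm3⟩ := cantor_gap (show (c:ℝ) - r/2 < (c:ℝ) by linarith)
  refine ⟨{e : ↥cantorSet | (e:ℝ) ∈ Set.Ioo wm wp}, ⟨?_, ?_⟩, ⟨hwm2, hwp1⟩, ?_⟩
  · have : {e : ↥cantorSet | (e:ℝ) ∈ Set.Ioo wm wp} = (Subtype.val) ⁻¹' (Set.Icc wm wp) := by
      ext e
      simp only [Set.mem_setOf_eq, Set.mem_preimage, Set.mem_Ioo, Set.mem_Icc]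
      constructor
      · rintro ⟨h1, h2⟩; exact ⟨le_of_lt h1, le_of_lt h2⟩
      · rintro ⟨h1, h2⟩
        refine ⟨lt_of_le_of_ne h1 ?_, lt_of_le_of_ne h2 ?_⟩
        · intro he; exact hwm3 (he ▸ e.2)
        · intro he; exact hwp3 (he.symm ▸ e.2)
    rw [this]
    exact isClosed_Icc.preimage continuous_subtype_val
  · exact isOpen_Ioo.preimage continuous_subtype_val
  · intro e he
    obtain ⟨h1, h2⟩ := he
    rw [mem_ball, Subtype.dist_eq, Real.dist_eq, abs_lt]
    constructor <;> linarith

lemma isGδ_preimage {α β : Type*} [TopologicalSpace α] [TopologicalSpace β] {s : Set β}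
    (hs : IsGδ s) {f : α → β} (hf : Continuous f) : IsGδ (f ⁻¹' s) := by
  obtain ⟨T, hTo, hTc, rfl⟩ := hs
  rw [Set.preimage_sInter]
  exact IsGδ.biInter hTc fun t ht => ((hTo t ht).preimage hf).isGδ

end Aux


theorem dense_td_Gdelta_in_cantor_times_real_zeroDim_somewhere
    {X : Set (↥cantorSet × ℝ)} (hd : Dense X) (hg : IsGδ X)
    (htd : ∀ x : ↥X, IsCSet ({x} : Set ↥X)) :
    ∃ x : ↥X, ∀ U ∈ nhds x, ∃ V : Set ↥X, IsClopen V ∧ x ∈ V ∧ V ⊆ U := by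
  classical
  haveI : CompleteSpace ↥cantorSet := isClosed_cantorSet.completeSpace_coe
  haveI : Nonempty (↥cantorSet × ℝ) := ⟨⟨⟨0, zero_mem_cantorSet⟩, 0⟩⟩
  by_contra hcon
  push_neg at hcon
  -- hcon : ∀ x, ∃ U ∈ nhds x, ∀ V, IsClopen V → x ∈ V → ¬ V ⊆ U
  -- the sets of points witnessing non-zero-dimensionality at scale 1/(n+1)
  set A : ℕ → Set ↥X := fun n => {a : ↥X | ∀ W : Set ↥X, IsClopen W → a ∈ W →
      ¬ (Subtype.val '' W ⊆ ball (a : (↥cantorSet × ℝ)) (1/((n:ℝ)+1)))} with hAdef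
  have cover : ∀ x : ↥X, ∃ n, x ∈ A n := by
    intro x
    obtain ⟨U, hU, hAU⟩ := hcon x
    obtain ⟨ε, hε, hballU⟩ := Metric.mem_nhds_iff.mp hU
    obtain ⟨n, hn⟩ := exists_nat_one_div_lt hε
    refine ⟨n, fun W hW hxW hsub => ?_⟩
    refine hAU W hW hxW ?_
    intro z hz
    apply hballU
    rw [mem_ball, Subtype.dist_eq]
    have hz2 : (↑z : (↥cantorSet × ℝ)) ∈ ball (↑x : (↥cantorSet × ℝ)) (1/((n:ℝ)+1)) := hsub (mem_image_of_mem _ hz)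
    rw [mem_ball] at hz2
    exact lt_trans hz2 hn
  -- enumerate the Gδ structure
  obtain ⟨T, hTo, hTc, hXT⟩ := hg
  obtain ⟨f, hf⟩ := (hTc.insert univ).exists_eq_range (insert_nonempty _ _)
  have hfo : ∀ n, IsOpen (f n) := by
    intro n
    have : f n ∈ insert univ T := hf ▸ mem_range_self n
    rcases this with h | h
    · rw [h]; exact isOpen_univ
    · exact hTo _ h
  have hXf : X = ⋂ n, f n := by
    have h1 : ⋂₀ insert univ T = ⋂₀ T := by rw [sInter_insert]; simp
    rw [hXT, ← h1, hf, sInter_range]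
  have hfd : ∀ n, Dense (f n) := by
    intro n
    exact hd.mono (by rw [hXf]; exact iInter_subset f n)
  -- Baire category argument
  have hcov : ⋃ i, (Sum.elim (fun n => closure (Subtype.val '' A n)) (fun n => (f n)ᶜ)) i
      = (univ : Set (↥cantorSet × ℝ)) := by
    apply eq_univ_of_forall
    intro z
    rw [mem_iUnion]
    by_cases hz : z ∈ X
    · obtain ⟨n, hn⟩ := cover ⟨z, hz⟩
      exact ⟨Sum.inl n, subset_closure ⟨⟨z, hz⟩, hn, rfl⟩⟩
    · rw [hXf, mem_iInter] at hz
      push_neg at hz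
      obtain ⟨n, hn⟩ := hz
      exact ⟨Sum.inr n, hn⟩
  have hclosed : ∀ i, IsClosed ((Sum.elim (fun n => closure (Subtype.val '' A n))
      (fun n => (f n)ᶜ)) i) := by
    rintro (n | n)
    · exact isClosed_closure
    · exact (hfo n).isClosed_compl
  have hkey : ∃ n, (interior (closure (Subtype.val '' A n))).Nonempty := by
    obtain ⟨i, hi⟩ := nonempty_interior_of_iUnion_of_closed hclosed hcov
    rcases i with n | n
    · exact ⟨n, by simpa using hi⟩
    · rw [Sum.elim_inr, interior_compl, (hfd n).closure_eq, compl_univ] at hi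
      exact absurd rfl hi.ne_empty
  obtain ⟨n, hi⟩ := hkey
  set G := interior (closure (Subtype.val '' A n)) with hGdef
  have hGo : IsOpen G := isOpen_interior
  have hGsub : G ⊆ closure (Subtype.val '' A n) := interior_subset
  set δ := 1/((n:ℝ)+1) with hδdef
  have hδ : 0 < δ := by positivity
  -- no nonempty small clopen subset inside G
  have noclopen : ∀ V : Set ↥X, IsClopen V → Subtype.val '' V ⊆ G →
      Bornology.IsBounded (Subtype.val '' V) → diam (Subtype.val '' V) < δ → V = ∅ := by
    intro V hV hVG hVb hVd
    by_contra hne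
    obtain ⟨v0, hv0⟩ := nonempty_iff_ne_empty.mpr hne
    obtain ⟨U, hUo, hUV⟩ := isOpen_induced_iff.mp hV.isOpen
    have himg : Subtype.val '' V = X ∩ U := by rw [← hUV]; exact Subtype.image_preimage_coe X U
    have hv0U : (↑v0 : (↥cantorSet × ℝ)) ∈ U ∩ G := by
      have h1 : (↑v0 : (↥cantorSet × ℝ)) ∈ X ∩ U := himg ▸ mem_image_of_mem _ hv0
      exact ⟨h1.2, hVG (mem_image_of_mem _ hv0)⟩
    obtain ⟨z, hz1, hz2⟩ := mem_closure_iff.mp (hGsub hv0U.2) (U ∩ G) (hUo.inter hGo) hv0U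
    obtain ⟨aa, haaA, rfl⟩ := hz2
    have haaV : aa ∈ V := by
      have h2 : (↑aa : (↥cantorSet × ℝ)) ∈ Subtype.val '' V := by
        rw [himg]; exact ⟨aa.2, hz1.1⟩
      obtain ⟨b, hbV, hb⟩ := h2
      rwa [Subtype.coe_injective hb] at hbV
    refine haaA V hV haaV ?_
    intro p hp
    have h1 : dist p (↑aa : (↥cantorSet × ℝ)) ≤ diam (Subtype.val '' V) :=
      dist_le_diam_of_mem hVb hp (mem_image_of_mem _ haaV)
    exact mem_ball.mpr (lt_of_le_of_lt h1 hVd)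
  -- choose a small box inside G
  obtain ⟨p0, hp0⟩ := hi
  obtain ⟨ε, hε, hballG⟩ := Metric.isOpen_iff.mp hGo p0 hp0
  set r := min (ε/2) (δ/4) with hrdef
  have hr : 0 < r := lt_min (by linarith) (by linarith)
  have hrε : r < ε := lt_of_le_of_lt (min_le_left _ _) (by linarith)
  have hrδ : r ≤ δ/4 := min_le_right _ _
  obtain ⟨K', hK'c, hK'm, hK's⟩ := cantor_clopen p0.1 hr
  set u₀ := p0.2 with hu₀def
  have boxG : ∀ e : ↥cantorSet, ∀ s : ℝ, e ∈ K' → u₀ - r < s → s < u₀ + r →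
      ((e, s) : (↥cantorSet × ℝ)) ∈ G := by
    intro e s he h1 h2
    apply hballG
    rw [mem_ball]
    have hp0eta : p0 = (p0.1, u₀) := rfl
    rw [hp0eta, Prod.dist_eq]
    rw [sup_lt_iff]
    constructor
    · exact lt_trans (mem_ball.mp (hK's he)) hrε
    · rw [Real.dist_eq, abs_lt]; constructor <;> [linarith; linarith]
  -- three points of X on a common vertical line
  have hQc : ∀ g : (↥cantorSet × ℝ × ℝ × ℝ) → (↥cantorSet × ℝ), Continuous g →
      IsGδ (g ⁻¹' X) := fun g hgc => isGδ_preimage ⟨T, hTo, hTc, hXT⟩ hgc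
  set W1 : Set (↥cantorSet × ℝ × ℝ × ℝ) :=
    (fun q : ↥cantorSet × ℝ × ℝ × ℝ => ((q.1, q.2.1) : (↥cantorSet × ℝ))) ⁻¹' X with hW1def
  set W2 : Set (↥cantorSet × ℝ × ℝ × ℝ) :=
    (fun q : ↥cantorSet × ℝ × ℝ × ℝ => ((q.1, q.2.2.1) : (↥cantorSet × ℝ))) ⁻¹' X with hW2def
  set W3 : Set (↥cantorSet × ℝ × ℝ × ℝ) :=
    (fun q : ↥cantorSet × ℝ × ℝ × ℝ => ((q.1, q.2.2.2) : (↥cantorSet × ℝ))) ⁻¹' X with hW3def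
  have hc1 : Continuous (fun q : ↥cantorSet × ℝ × ℝ × ℝ => ((q.1, q.2.1) : (↥cantorSet × ℝ))) := by fun_prop
  have hc2 : Continuous (fun q : ↥cantorSet × ℝ × ℝ × ℝ => ((q.1, q.2.2.1) : (↥cantorSet × ℝ))) := by fun_prop
  have hc3 : Continuous (fun q : ↥cantorSet × ℝ × ℝ × ℝ => ((q.1, q.2.2.2) : (↥cantorSet × ℝ))) := by fun_prop
  have hW1d : Dense W1 := by
    rw [Metric.dense_iff]
    intro q ρ hρ
    obtain ⟨p, hpb, hpX⟩ := Metric.dense_iff.mp hd (q.1, q.2.1) ρ hρ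
    refine ⟨(p.1, p.2, q.2.2.1, q.2.2.2), ?_, hpX⟩
    rw [mem_ball] at hpb ⊢
    rw [Prod.dist_eq] at hpb
    rw [Prod.dist_eq, Prod.dist_eq, Prod.dist_eq, sup_lt_iff, sup_lt_iff, sup_lt_iff]
    refine ⟨lt_of_le_of_lt le_sup_left hpb, lt_of_le_of_lt le_sup_right hpb, ?_, ?_⟩ <;>
      simp [dist_self, hρ]
  have hW2d : Dense W2 := by
    rw [Metric.dense_iff]
    intro q ρ hρ
    obtain ⟨p, hpb, hpX⟩ := Metric.dense_iff.mp hd (q.1, q.2.2.1) ρ hρ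
    refine ⟨(p.1, q.2.1, p.2, q.2.2.2), ?_, hpX⟩
    rw [mem_ball] at hpb ⊢
    rw [Prod.dist_eq] at hpb
    rw [Prod.dist_eq, Prod.dist_eq, Prod.dist_eq, sup_lt_iff, sup_lt_iff, sup_lt_iff]
    refine ⟨lt_of_le_of_lt le_sup_left hpb, ?_, lt_of_le_of_lt le_sup_right hpb, ?_⟩ <;>
      simp [dist_self, hρ]
  have hW3d : Dense W3 := by
    rw [Metric.dense_iff]
    intro q ρ hρ
    obtain ⟨p, hpb, hpX⟩ := Metric.dense_iff.mp hd (q.1, q.2.2.2) ρ hρ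
    refine ⟨(p.1, q.2.1, q.2.2.1, p.2), ?_, hpX⟩
    rw [mem_ball] at hpb ⊢
    rw [Prod.dist_eq] at hpb
    rw [Prod.dist_eq, Prod.dist_eq, Prod.dist_eq, sup_lt_iff, sup_lt_iff, sup_lt_iff]
    refine ⟨lt_of_le_of_lt le_sup_left hpb, ?_, ?_, lt_of_le_of_lt le_sup_right hpb⟩ <;>
      simp [dist_self, hρ]
  have hWd : Dense (W1 ∩ W2 ∩ W3) :=
    Dense.inter_of_Gδ ((hQc _ hc1).inter (hQc _ hc2)) (hQc _ hc3)
      (Dense.inter_of_Gδ (hQc _ hc1) (hQc _ hc2) hW1d hW2d) hW3d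
  set O' : Set (↥cantorSet × ℝ × ℝ × ℝ) :=
    {q | q.1 ∈ K' ∧ q.2.1 ∈ Ioo (u₀-3*r/4) (u₀-r/2) ∧ q.2.2.1 ∈ Ioo (u₀-r/4) (u₀+r/4) ∧
      q.2.2.2 ∈ Ioo (u₀+r/2) (u₀+3*r/4)} with hO'def
  have hO'o : IsOpen O' := by
    have : O' = ((fun q : ↥cantorSet × ℝ × ℝ × ℝ => q.1) ⁻¹' K') ∩
        ((fun q : ↥cantorSet × ℝ × ℝ × ℝ => q.2.1) ⁻¹' Ioo (u₀-3*r/4) (u₀-r/2)) ∩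
        ((fun q : ↥cantorSet × ℝ × ℝ × ℝ => q.2.2.1) ⁻¹' Ioo (u₀-r/4) (u₀+r/4)) ∩
        ((fun q : ↥cantorSet × ℝ × ℝ × ℝ => q.2.2.2) ⁻¹' Ioo (u₀+r/2) (u₀+3*r/4)) := by
      ext q; simp [hO'def]; tauto
    rw [this]
    exact (((hK'c.isOpen.preimage (by fun_prop)).inter
      (isOpen_Ioo.preimage (by fun_prop))).inter
      (isOpen_Ioo.preimage (by fun_prop))).inter (isOpen_Ioo.preimage (by fun_prop))
  have hO'ne : O'.Nonempty := by
    refine ⟨(p0.1, u₀-5*r/8, u₀, u₀+5*r/8), hK'm, ?_, ?_, ?_⟩ <;>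
      constructor <;> simp only [] <;> linarith
  obtain ⟨q, hqO, hqW⟩ := hWd.inter_open_nonempty O' hO'o hO'ne
  obtain ⟨hqc, hqt1, hqt2, hqt3⟩ := hqO
  set c := q.1 with hcdef
  set t₁ := q.2.1 with ht₁def
  set t₂ := q.2.2.1 with ht₂def
  set t₃ := q.2.2.2 with ht₃def
  have hx1 : ((c, t₁) : (↥cantorSet × ℝ)) ∈ X := hqW.1.1
  have hx2 : ((c, t₂) : (↥cantorSet × ℝ)) ∈ X := hqW.1.2
  have hx3 : ((c, t₃) : (↥cantorSet × ℝ)) ∈ X := hqW.2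
  set xx : ↥X := ⟨(c, t₂), hx2⟩ with hxxdef
  set yy : ↥X := ⟨(c, t₁), hx1⟩ with hyydef
  set yy' : ↥X := ⟨(c, t₃), hx3⟩ with hyy'def
  obtain ⟨S₀, hS₀c, hS₀e⟩ := htd xx
  have hxxmem : xx ∈ ⋂₀ S₀ := by rw [← hS₀e]; exact mem_singleton _
  have hyne : yy ≠ xx := by
    intro h
    have : t₁ = t₂ := congrArg (fun z : ↥X => (z : (↥cantorSet × ℝ)).2) h
    obtain ⟨h1, h2⟩ := hqt1; obtain ⟨h3, h4⟩ := hqt2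
    linarith
  have hy'ne : yy' ≠ xx := by
    intro h
    have : t₃ = t₂ := congrArg (fun z : ↥X => (z : (↥cantorSet × ℝ)).2) h
    obtain ⟨h1, h2⟩ := hqt3; obtain ⟨h3, h4⟩ := hqt2
    linarith
  have hynotin : yy ∉ ⋂₀ S₀ := by rw [← hS₀e]; exact fun h => hyne h
  have hy'notin : yy' ∉ ⋂₀ S₀ := by rw [← hS₀e]; exact fun h => hy'ne h
  rw [mem_sInter] at hynotin hy'notin
  push_neg at hynotin hy'notin
  obtain ⟨Sa, hSamem, hySa⟩ := hynotin
  obtain ⟨Sb, hSbmem, hy'Sb⟩ := hy'notin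
  set S := Sa ∩ Sb with hSdef
  have hS : IsClopen S := (hS₀c _ hSamem).inter (hS₀c _ hSbmem)
  have hxS : xx ∈ S := ⟨mem_sInter.mp hxxmem Sa hSamem, mem_sInter.mp hxxmem Sb hSbmem⟩
  set F := closure (Subtype.val '' S) with hFdef
  have hXF : ∀ z : ↥X, (↑z : (↥cantorSet × ℝ)) ∈ F → z ∈ S := by
    obtain ⟨Fc, hFcc, hFceq⟩ := isClosed_induced_iff.mp hS.isClosed
    intro z hz
    have h1 : Subtype.val '' S ⊆ Fc := by
      rw [← hFceq]; exact image_preimage_subset _ _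
    have h2 : F ⊆ Fc := closure_minimal h1 hFcc
    have h3 : (↑z : (↥cantorSet × ℝ)) ∈ Fc := h2 hz
    show z ∈ S
    rw [← hFceq]
    exact h3
  -- find heights s₁ s₂ avoiding the closure of S
  have hline : ∀ ta tb : ℝ, ta < tb → (∀ s, ta < s → s < tb → ((c, s) : (↥cantorSet × ℝ)) ∈ F) →
      ((c, ta) : (↥cantorSet × ℝ)) ∈ F ∧ ((c, tb) : (↥cantorSet × ℝ)) ∈ F := by
    intro ta tb htab hall
    have hsub : (fun s : ℝ => ((c, s) : (↥cantorSet × ℝ))) '' Ioo ta tb ⊆ F := by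
      rintro _ ⟨s, hs, rfl⟩; exact hall s hs.1 hs.2
    have hcont : Continuous (fun s : ℝ => ((c, s) : (↥cantorSet × ℝ))) := by fun_prop
    constructor
    · have h1 : ((c, ta) : (↥cantorSet × ℝ)) ∈ closure ((fun s : ℝ => ((c, s) : (↥cantorSet × ℝ))) '' Ioo ta tb) := by
        refine image_closure_subset_closure_image hcont (mem_image_of_mem _ ?_)
        rw [closure_Ioo (ne_of_lt htab)]
        exact ⟨le_refl _, le_of_lt htab⟩
      have h2 := closure_mono hsub h1
      rwa [hFdef, closure_closure] at h2
    · have h1 : ((c, tb) : (↥cantorSet × ℝ)) ∈ closure ((fun s : ℝ => ((c, s) : (↥cantorSet × ℝ))) '' Ioo ta tb) := by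
        refine image_closure_subset_closure_image hcont (mem_image_of_mem _ ?_)
        rw [closure_Ioo (ne_of_lt htab)]
        exact ⟨le_of_lt htab, le_refl _⟩
      have h2 := closure_mono hsub h1
      rwa [hFdef, closure_closure] at h2
  have hs₁ : ∃ s₁, t₁ < s₁ ∧ s₁ < t₂ ∧ ((c, s₁) : (↥cantorSet × ℝ)) ∉ F := by
    by_contra hcon2
    push_neg at hcon2
    have ht12 : t₁ < t₂ := by
      obtain ⟨h1, h2⟩ := hqt1; obtain ⟨h3, h4⟩ := hqt2; linarith
    have := (hline t₁ t₂ ht12 hcon2).1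
    exact hySa (hXF yy this).1
  have hs₂ : ∃ s₂, t₂ < s₂ ∧ s₂ < t₃ ∧ ((c, s₂) : (↥cantorSet × ℝ)) ∉ F := by
    by_contra hcon2
    push_neg at hcon2
    have ht23 : t₂ < t₃ := by
      obtain ⟨h1, h2⟩ := hqt2; obtain ⟨h3, h4⟩ := hqt3; linarith
    have := (hline t₂ t₃ ht23 hcon2).2
    exact hy'Sb (hXF yy' this).2
  obtain ⟨s₁, hs₁a, hs₁b, hs₁F⟩ := hs₁
  obtain ⟨s₂, hs₂a, hs₂b, hs₂F⟩ := hs₂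
  -- a clopen neighborhood of c in the Cantor set avoiding the rows at heights s₁, s₂
  set R : Set ↥cantorSet := ((fun e : ↥cantorSet => ((e, s₁) : (↥cantorSet × ℝ))) ⁻¹' F) ∪
    ((fun e : ↥cantorSet => ((e, s₂) : (↥cantorSet × ℝ))) ⁻¹' F) with hRdef
  have hRc : IsClosed R :=
    (isClosed_closure.preimage (by fun_prop)).union (isClosed_closure.preimage (by fun_prop))
  have hcR : c ∉ R := by
    rintro (h | h)
    · exact hs₁F h
    · exact hs₂F h
  have hT'o : IsOpen (Rᶜ ∩ K') := hRc.isOpen_compl.inter hK'c.isOpen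
  have hcT' : c ∈ Rᶜ ∩ K' := ⟨hcR, hqc⟩
  obtain ⟨ρ, hρ, hρball⟩ := Metric.isOpen_iff.mp hT'o c hcT'
  obtain ⟨K, hKc, hKm, hKs⟩ := cantor_clopen c hρ
  have hKR : K ⊆ Rᶜ := fun e he => (hρball (hKs he)).1
  have hKK' : K ⊆ K' := fun e he => (hρball (hKs he)).2
  -- the clopen set V
  set V : Set ↥X := S ∩ (Subtype.val ⁻¹' (K ×ˢ Ioo s₁ s₂)) with hVdef
  have hxV : xx ∈ V := ⟨hxS, ⟨hKm, ⟨hs₁b, hs₂a⟩⟩⟩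
  have hVopen : IsOpen V :=
    hS.isOpen.inter ((hKc.isOpen.prod isOpen_Ioo).preimage continuous_subtype_val)
  have hVeq : V = Subtype.val ⁻¹' (F ∩ K ×ˢ Icc s₁ s₂) := by
    ext z
    simp only [hVdef, mem_inter_iff, mem_preimage, mem_prod, mem_Ioo, mem_Icc]
    constructor
    · rintro ⟨hzS, hzK, hz1, hz2⟩
      exact ⟨subset_closure (mem_image_of_mem _ hzS), hzK, le_of_lt hz1, le_of_lt hz2⟩
    · rintro ⟨hzF, hzK, hz1, hz2⟩
      have hzS := hXF z hzF
      have hne1 : (↑z : (↥cantorSet × ℝ)).2 ≠ s₁ := by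
        intro he
        apply hKR hzK
        left
        show ((↑z : (↥cantorSet × ℝ)).1, s₁) ∈ F
        rw [← he]
        exact hzF
      have hne2 : (↑z : (↥cantorSet × ℝ)).2 ≠ s₂ := by
        intro he
        apply hKR hzK
        right
        show ((↑z : (↥cantorSet × ℝ)).1, s₂) ∈ F
        rw [← he]
        exact hzF
      exact ⟨hzS, hzK, lt_of_le_of_ne hz1 (Ne.symm hne1), lt_of_le_of_ne hz2 hne2⟩
  have hVclosed : IsClosed V := by
    rw [hVeq]
    exact (isClosed_closure.inter (hKc.isClosed.prod isClosed_Icc)).preimage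
      continuous_subtype_val
  have hmemr : ∀ z : ↥X, z ∈ V → (↑z : (↥cantorSet × ℝ)).1 ∈ ball p0.1 r ∧ u₀ - r < (↑z : (↥cantorSet × ℝ)).2 ∧
      (↑z : (↥cantorSet × ℝ)).2 < u₀ + r := by
    intro z hz
    obtain ⟨hzS, hzK, hz1, hz2⟩ := hz
    refine ⟨hK's (hKK' hzK), ?_, ?_⟩
    · obtain ⟨ha, hb⟩ := hqt1; linarith
    · obtain ⟨ha, hb⟩ := hqt3; linarith
  have hVG : Subtype.val '' V ⊆ G := by
    rintro _ ⟨z, hzV, rfl⟩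
    obtain ⟨h1, h2, h3⟩ := hmemr z hzV
    have heta : (↑z : (↥cantorSet × ℝ)) = (((↑z : (↥cantorSet × ℝ)).1, (↑z : (↥cantorSet × ℝ)).2) : (↥cantorSet × ℝ)) := rfl
    rw [heta]
    exact boxG _ _ (hKK' hzV.2.1) h2 h3
  have hdista : ∀ p' q' : (↥cantorSet × ℝ), p'.1 ∈ ball p0.1 r → q'.1 ∈ ball p0.1 r →
      u₀ - r ≤ p'.2 → p'.2 ≤ u₀ + r → u₀ - r ≤ q'.2 → q'.2 ≤ u₀ + r →
      dist p' q' ≤ δ/2 := by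
    intro p' q' h1 h2 h3 h4 h5 h6
    have heta : dist p' q' = dist (p'.1, p'.2) (q'.1, q'.2) := rfl
    rw [heta, Prod.dist_eq, sup_le_iff]
    constructor
    · have ha := mem_ball.mp h1
      have hb := mem_ball.mp h2
      calc dist p'.1 q'.1 ≤ dist p'.1 p0.1 + dist p0.1 q'.1 := dist_triangle _ _ _
        _ ≤ r + r := by rw [dist_comm p0.1 q'.1] at *; exact add_le_add (le_of_lt ha) (le_of_lt hb)
        _ ≤ δ/2 := by linarith
    · rw [Real.dist_eq, abs_le]
      constructor <;> linarith
  have hVb : Bornology.IsBounded (Subtype.val '' V) := by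
    refine (Metric.isBounded_ball (x := p0) (r := δ)).subset ?_
    rintro _ ⟨z, hzV, rfl⟩
    obtain ⟨h1, h2, h3⟩ := hmemr z hzV
    rw [mem_ball]
    have heta : dist (↑z : (↥cantorSet × ℝ)) p0 = dist ((↑z : (↥cantorSet × ℝ)).1, (↑z : (↥cantorSet × ℝ)).2) (p0.1, u₀) := rfl
    rw [heta, Prod.dist_eq, sup_lt_iff]
    constructor
    · exact lt_of_lt_of_le (mem_ball.mp h1) (by linarith)
    · rw [Real.dist_eq, abs_lt]; constructor <;> linarith
  have hVd : diam (Subtype.val '' V) < δ := by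
    have h1 : diam (Subtype.val '' V) ≤ δ/2 := by
      apply diam_le_of_forall_dist_le (by linarith)
      rintro _ ⟨z, hzV, rfl⟩ _ ⟨w, hwV, rfl⟩
      obtain ⟨ha, hb, hc⟩ := hmemr z hzV
      obtain ⟨hd', he, hf'⟩ := hmemr w hwV
      exact hdista _ _ ha hd' (le_of_lt hb) (le_of_lt hc) (le_of_lt he) (le_of_lt hf')
    linarith
  have := noclopen V ⟨hVclosed, hVopen⟩ hVG hVb hVd
  rw [this] at hxV
  exact hxV
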